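/- Let W be the free ℂ-vector space with basis the set of all partitions. For i ∈ ℤ define linear operators on W by: f_i(λ) = μ if μ is the (unique) partition obtained from λ by adding a box of residue i and f_i(λ) = 0 if none exists; e_i(λ) = ν if ν is the (unique) partition obtained from λ by removing a box of residue i and e_i(λ) = 0 if none exists; h_i(λ) = (δ_{i,0} − 2 v_i(λ) + v_{i−1}(λ) + v_{i+1}(λ))·λ. Then [e_i, f_j] = δ_{ij} h_i, [h_i, e_j] = C_{ij} e_j and [h_i, f_j] = −C_{ij} f_j for all i, j ∈ ℤ, where C_{ij} = 2δ_{ij} − δ_{i−1,j} − δ_{i+1,j} is the A_∞ Cartan matrix. (These are the Chevalley relations underlying the geometric realization of the basic representation of sl_∞ on ⊕_λ H_T^{2|λ|}(𝔐(v^λ)), with the empty partition as highest weight vector.) -/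

import Mathlib

/-- A partition: a non-increasing, eventually-zero sequence of non-negative integers.
`part k` is the `(k+1)`-st part `λ_{k+1}`. -/
structure PartitionSeq : Type where
  part : ℕ → ℕ
  mono : ∀ k, part (k + 1) ≤ part k
  ev_zero : ∃ N : ℕ, ∀ k, N ≤ k → part k = 0

namespace PartitionSeq

/-- The Young diagram of a partition: the box `b = (j, k)` in column `j ≥ 0` and row
`k ≥ 0` belongs to the diagram iff `j < λ_{k+1}`. -/
def diagram (lam : PartitionSeq) : Set (ℕ × ℕ) := {b | b.1 < lam.part b.2}

/-- The size `|λ| = Σ_i λ_i` of a partition. -/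
noncomputable def size (lam : PartitionSeq) : ℕ := ∑ᶠ k : ℕ, lam.part k

end PartitionSeq

/-- The residue `j - k` of the box `b = (j, k)`. -/
def boxResidue (b : ℕ × ℕ) : ℤ := (b.1 : ℤ) - (b.2 : ℤ)

/-- `v_i(λ)`: the number of boxes of the Young diagram of `λ` of residue `i`. -/
noncomputable def boxCount (lam : PartitionSeq) (i : ℤ) : ℕ :=
  {b ∈ lam.diagram | boxResidue b = i}.ncard

/-- The free `ℂ`-vector space with basis the set of all partitions (the underlying space
of `⊕_λ H_T^{2|λ|}(𝔐(v^λ))`). -/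
abbrev PartSpace : Type := PartitionSeq →₀ ℂ

open Classical in
/-- `f_i`: box addition. `f_i(λ) = μ` if `μ` is the (unique) partition obtained from `λ`
by adding a box of residue `i`, and `f_i(λ) = 0` if no such partition exists. -/
noncomputable def fOp (i : ℤ) : PartSpace →ₗ[ℂ] PartSpace :=
  Finsupp.lift PartSpace ℂ PartitionSeq fun lam =>
    if h : ∃ mu : PartitionSeq, ∃ b : ℕ × ℕ,
        boxResidue b = i ∧ b ∉ lam.diagram ∧ mu.diagram = lam.diagram ∪ {b} then
      Finsupp.single h.choose 1
    else 0

open Classical in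
/-- `e_i`: box removal. `e_i(λ) = ν` if `ν` is the (unique) partition obtained from `λ`
by removing a box of residue `i`, and `e_i(λ) = 0` if no such partition exists. -/
noncomputable def eOp (i : ℤ) : PartSpace →ₗ[ℂ] PartSpace :=
  Finsupp.lift PartSpace ℂ PartitionSeq fun lam =>
    if h : ∃ mu : PartitionSeq, ∃ b : ℕ × ℕ,
        boxResidue b = i ∧ b ∈ lam.diagram ∧ mu.diagram = lam.diagram \ {b} then
      Finsupp.single h.choose 1
    else 0

/-- `h_i`: the diagonal operator
`h_i(λ) = (δ_{i,0} − 2v_i(λ) + v_{i−1}(λ) + v_{i+1}(λ)) λ`. -/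
noncomputable def hOp (i : ℤ) : PartSpace →ₗ[ℂ] PartSpace :=
  Finsupp.lift PartSpace ℂ PartitionSeq fun lam =>
    ((((if i = 0 then 1 else 0) - 2 * (boxCount lam i : ℤ)
        + (boxCount lam (i - 1) : ℤ) + (boxCount lam (i + 1) : ℤ) : ℤ) : ℂ)) •
      Finsupp.single lam 1

/-- The `A_∞` Cartan matrix `C_{ij} = 2δ_{ij} − δ_{i−1,j} − δ_{i+1,j}`. -/
def cartanAInf (i j : ℤ) : ℤ :=
  (if i = j then 2 else 0) - (if i - 1 = j then 1 else 0) - (if i + 1 = j then 1 else 0)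


section Aux

open Set

/-- Lower-closed sets of boxes. -/
def LC (S : Set (ℕ × ℕ)) : Prop :=
  ∀ x y : ℕ × ℕ, x.1 ≤ y.1 → x.2 ≤ y.2 → y ∈ S → x ∈ S

lemma part_anti (lam : PartitionSeq) : Antitone lam.part :=
  antitone_nat_of_succ_le lam.mono

lemma diagram_LC (lam : PartitionSeq) : LC lam.diagram := by
  rintro ⟨a1, a2⟩ ⟨b1, b2⟩ h1 h2 hb
  simp only [PartitionSeq.diagram, Set.mem_setOf_eq] at *
  exact lt_of_le_of_lt h1 (lt_of_lt_of_le hb (part_anti lam h2))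

lemma diagram_finite (lam : PartitionSeq) : lam.diagram.Finite := by
  obtain ⟨N, hN⟩ := lam.ev_zero
  apply Set.Finite.subset ((Set.finite_Iio (lam.part 0)).prod (Set.finite_Iio N))
  rintro ⟨j, k⟩ hjk
  simp only [PartitionSeq.diagram, Set.mem_setOf_eq] at hjk
  constructor
  · exact lt_of_lt_of_le hjk (part_anti lam (Nat.zero_le k))
  · simp only [Set.mem_Iio]
    by_contra h
    push_neg at h
    rw [hN k h] at hjk
    omega

lemma ext_of_diagram {lam mu : PartitionSeq} (h : lam.diagram = mu.diagram) : lam = mu := by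
  have hp : lam.part = mu.part := by
    funext k
    have hall : ∀ j, j < lam.part k ↔ j < mu.part k := by
      intro j
      constructor <;> intro hj
      · have : (j, k) ∈ lam.diagram := hj
        rw [h] at this; exact this
      · have : (j, k) ∈ mu.diagram := hj
        rw [← h] at this; exact this
    refine le_antisymm ?_ ?_
    · by_contra hc
      push_neg at hc
      exact absurd ((hall _).mp hc) (lt_irrefl _)
    · by_contra hc
      push_neg at hc
      exact absurd ((hall _).mpr hc) (lt_irrefl _)
  cases lam; cases mu; simpa using hp

/-- A finite lower-closed subset of ℕ is an initial segment. -/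
lemma seg_eq_Iio {T : Set ℕ} (hfin : T.Finite) (hlc : ∀ a b : ℕ, a ≤ b → b ∈ T → a ∈ T) :
    T = Set.Iio T.ncard := by
  ext m
  simp only [Set.mem_Iio]
  constructor
  · intro hm
    have hsub : Set.Iic m ⊆ T := fun a ha => hlc a m ha hm
    have : (Set.Iic m).ncard ≤ T.ncard := Set.ncard_le_ncard hsub hfin
    have hIic : (Set.Iic m).ncard = m + 1 := by
      rw [← Finset.coe_Iic, Set.ncard_coe_finset, Nat.card_Iic]
    omega
  · intro hm
    by_contra h
    have hsub : T ⊆ Set.Iio m := by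
      intro x hx
      simp only [Set.mem_Iio]
      by_contra hx'
      push_neg at hx'
      exact h (hlc m x hx' hx)
    have : T.ncard ≤ (Set.Iio m).ncard := Set.ncard_le_ncard hsub (Set.finite_Iio m)
    have hIio : (Set.Iio m).ncard = m := by
      rw [← Finset.coe_Iio, Set.ncard_coe_finset, Nat.card_Iio]
    omega

/-- A finite lower-closed set of boxes is the diagram of a partition. -/
lemma exists_partition_of_LC {S : Set (ℕ × ℕ)} (hfin : S.Finite) (hlc : LC S) :
    ∃ lam : PartitionSeq, lam.diagram = S := by
  have hrowfin : ∀ k : ℕ, {j : ℕ | (j, k) ∈ S}.Finite := by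
    intro k
    apply Set.Finite.preimage (f := fun j => (j, k)) _ hfin
    intro a _ b _ hab
    exact (Prod.mk.injEq _ _ _ _).mp hab |>.1
  have hrowlc : ∀ k : ℕ, ∀ a b : ℕ, a ≤ b → b ∈ {j : ℕ | (j, k) ∈ S} → a ∈ {j : ℕ | (j, k) ∈ S} := by
    intro k a b hab hb
    exact hlc (a, k) (b, k) hab le_rfl hb
  set p : ℕ → ℕ := fun k => {j : ℕ | (j, k) ∈ S}.ncard with hp
  have hmem : ∀ j k : ℕ, (j, k) ∈ S ↔ j < p k := by
    intro j k
    have := seg_eq_Iio (hrowfin k) (hrowlc k)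
    constructor
    · intro h
      have : j ∈ Set.Iio (p k) := this ▸ h
      exact this
    · intro h
      have : j ∈ {j : ℕ | (j, k) ∈ S} := by rw [this]; exact h
      exact this
  have hmono : ∀ k, p (k + 1) ≤ p k := by
    intro k
    apply Set.ncard_le_ncard _ (hrowfin k)
    intro j hj
    exact hlc (j, k) (j, k + 1) le_rfl (by omega) hj
  have hev : ∃ N : ℕ, ∀ k, N ≤ k → p k = 0 := by
    obtain ⟨N, hN⟩ := ((hfin.image Prod.snd).bddAbove)
    refine ⟨N + 1, fun k hk => ?_⟩
    rw [hp]
    simp only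
    rw [Set.ncard_eq_zero (hrowfin k)]
    ext j
    simp only [Set.mem_setOf_eq, Set.mem_empty_iff_false, iff_false]
    intro hj
    have : k ∈ Prod.snd '' S := ⟨(j, k), hj, rfl⟩
    have := hN this
    omega
  refine ⟨⟨p, hmono, hev⟩, ?_⟩
  ext ⟨j, k⟩
  simp only [PartitionSeq.diagram, Set.mem_setOf_eq]
  exact (hmem j k).symm

end Aux

section EDef

open Set

/-- The set of rows whose boxes reach strictly beyond diagonal `i`. -/
def segSet (lam : PartitionSeq) (i : ℤ) : Set ℕ := {k : ℕ | (k : ℤ) + i < (lam.part k : ℤ)}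

/-- `E λ i`: boundary profile function. -/
noncomputable def Ei (lam : PartitionSeq) (i : ℤ) : ℕ := (segSet lam i).ncard

lemma segSet_finite (lam : PartitionSeq) (i : ℤ) : (segSet lam i).Finite := by
  obtain ⟨N, hN⟩ := lam.ev_zero
  apply Set.Finite.subset (Set.finite_Iio (max N (-i).toNat))
  intro k hk
  simp only [segSet, Set.mem_setOf_eq] at hk
  simp only [Set.mem_Iio]
  rcases le_or_gt N k with h | h
  · rw [hN k h] at hk
    have : (k : ℤ) < -i := by omega
    have : (k : ℤ) < ((-i).toNat : ℤ) := lt_of_lt_of_le this (Int.self_le_toNat _)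
    omega
  · omega

lemma segSet_lc (lam : PartitionSeq) (i : ℤ) :
    ∀ a b : ℕ, a ≤ b → b ∈ segSet lam i → a ∈ segSet lam i := by
  intro a b hab hb
  simp only [segSet, Set.mem_setOf_eq] at *
  have := part_anti lam hab
  omega

lemma mem_segSet_iff (lam : PartitionSeq) (i : ℤ) (k : ℕ) :
    (k : ℤ) + i < (lam.part k : ℤ) ↔ k < Ei lam i := by
  have := seg_eq_Iio (segSet_finite lam i) (segSet_lc lam i)
  constructor
  · intro h
    have : k ∈ Set.Iio (Ei lam i) := this ▸ (h : k ∈ segSet lam i)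
    exact this
  · intro h
    have : k ∈ segSet lam i := by rw [this]; exact h
    exact this

lemma m_le_Ei (lam : PartitionSeq) (i : ℤ) : (-i).toNat ≤ Ei lam i := by
  rcases Nat.eq_zero_or_pos (-i).toNat with h | h
  · omega
  · have : ((-i).toNat - 1 : ℕ) < Ei lam i := by
      rw [← mem_segSet_iff]
      have : (((-i).toNat - 1 : ℕ) : ℤ) < -i := by omega
      have h0 : (0 : ℤ) ≤ (lam.part ((-i).toNat - 1) : ℤ) := by positivity
      omega
    omega

lemma Ei_succ_le (lam : PartitionSeq) (i : ℤ) : Ei lam (i + 1) ≤ Ei lam i := by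
  by_contra h
  push_neg at h
  have hk : Ei lam i < Ei lam (i + 1) := h
  have := (mem_segSet_iff lam (i + 1) (Ei lam i)).mpr hk
  have := (mem_segSet_iff lam i (Ei lam i)).mp (by omega)
  omega

lemma Ei_le_succ (lam : PartitionSeq) (i : ℤ) : Ei lam i ≤ Ei lam (i + 1) + 1 := by
  by_contra h
  push_neg at h
  have hk : Ei lam (i + 1) + 1 < Ei lam i := h
  have h1 := (mem_segSet_iff lam i (Ei lam (i + 1) + 1)).mpr hk
  have h2 : ((Ei lam (i + 1) : ℤ)) + (i + 1) < (lam.part (Ei lam (i + 1)) : ℤ) := by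
    have hmono : lam.part (Ei lam (i+1) + 1) ≤ lam.part (Ei lam (i+1)) := lam.mono _
    omega
  have := (mem_segSet_iff lam (i + 1) (Ei lam (i + 1))).mp h2
  omega

lemma boxCount_eq (lam : PartitionSeq) (i : ℤ) :
    boxCount lam i = Ei lam i - (-i).toNat := by
  have hbij : {b ∈ lam.diagram | boxResidue b = i} =
      (fun k : ℕ => (((k : ℤ) + i).toNat, k)) '' (Set.Ico (-i).toNat (Ei lam i)) := by
    ext ⟨j, k⟩
    simp only [Set.mem_setOf_eq, Set.mem_image, Set.mem_Ico, PartitionSeq.diagram,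
      boxResidue]
    constructor
    · rintro ⟨hjk, hres⟩
      refine ⟨k, ⟨?_, ?_⟩, ?_⟩
      · have : (0 : ℤ) ≤ (k : ℤ) + i := by omega
        omega
      · rw [← mem_segSet_iff]
        omega
      · have : (k : ℤ) + i = (j : ℤ) := by omega
        simp [Prod.ext_iff, this]
    · rintro ⟨k', ⟨hk1, hk2⟩, heq⟩
      have h2 : k' = k := congrArg Prod.snd heq
      have h1 : (((k' : ℤ) + i).toNat) = j := congrArg Prod.fst heq
      rw [h2] at hk1 hk2 h1
      have hj : (j : ℤ) = (k : ℤ) + i := by omega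
      have hseg := (mem_segSet_iff lam i k).mpr hk2
      constructor
      · omega
      · omega
  rw [boxCount, hbij]
  rw [Set.ncard_image_of_injective _ (fun a b hab => by simpa using (congrArg Prod.snd hab))]
  rw [← Finset.coe_Ico, Set.ncard_coe_finset, Nat.card_Ico]

end EDef

section AddRem

/-- `b` is an addable box for `lam`. -/
def AddP (lam : PartitionSeq) (i : ℤ) (b : ℕ × ℕ) : Prop :=
  boxResidue b = i ∧ b ∉ lam.diagram ∧ ∃ mu : PartitionSeq, mu.diagram = lam.diagram ∪ {b}

/-- `b` is a removable box for `lam`. -/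
def RemP (lam : PartitionSeq) (i : ℤ) (b : ℕ × ℕ) : Prop :=
  boxResidue b = i ∧ b ∈ lam.diagram ∧ ∃ mu : PartitionSeq, mu.diagram = lam.diagram \ {b}

lemma add_spec {lam : PartitionSeq} {i : ℤ} {b : ℕ × ℕ} (h : AddP lam i b) :
    b.2 = Ei lam i ∧ (lam.part b.2 : ℤ) = (b.2 : ℤ) + i ∧
      Ei lam (i - 1) = Ei lam i + 1 ∧ Ei lam (i + 1) = Ei lam i := by
  obtain ⟨j, k⟩ := b
  obtain ⟨hres, hnot, mu, hmu⟩ := h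
  simp only [boxResidue] at hres
  have hLC : LC (lam.diagram ∪ {(j, k)}) := hmu ▸ diagram_LC mu
  have hnotD : ¬ j < lam.part k := hnot
  -- part k = j
  have hpk : lam.part k = j := by
    rcases Nat.eq_zero_or_pos j with hj | hj
    · omega
    · have : (j - 1, k) ∈ lam.diagram ∪ {(j, k)} :=
        hLC (j - 1, k) (j, k) (by omega) le_rfl (Or.inr rfl)
      rcases this with h' | h'
      · have : j - 1 < lam.part k := h'
        omega
      · simp only [Set.mem_singleton_iff, Prod.mk.injEq] at h'
        omega
  -- row above
  have hrow : 0 < k → j < lam.part (k - 1) := by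
    intro hk
    have : (j, k - 1) ∈ lam.diagram ∪ {(j, k)} :=
      hLC (j, k - 1) (j, k) le_rfl (by omega) (Or.inr rfl)
    rcases this with h' | h'
    · exact h'
    · simp only [Set.mem_singleton_iff, Prod.mk.injEq] at h'
      omega
  -- E i = k
  have hEile : Ei lam i ≤ k := by
    by_contra hc
    push_neg at hc
    have := (mem_segSet_iff lam i k).mpr hc
    omega
  have hEik : Ei lam i = k := by
    rcases Nat.eq_zero_or_pos k with hk | hk
    · omega
    · have h1 : (↑(k - 1) : ℤ) + i < (lam.part (k - 1) : ℤ) := by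
        have := hrow hk
        omega
      have := (mem_segSet_iff lam i (k - 1)).mp h1
      omega
  -- E (i-1) = k + 1
  have hEm : Ei lam (i - 1) = k + 1 := by
    have h1 : (k : ℤ) + (i - 1) < (lam.part k : ℤ) := by omega
    have h2 := (mem_segSet_iff lam (i - 1) k).mp h1
    have h3 := Ei_le_succ lam (i - 1)
    rw [sub_add_cancel] at h3
    omega
  -- E (i+1) = k
  have hEp : Ei lam (i + 1) = k := by
    have h3 := Ei_succ_le lam i
    rcases Nat.eq_zero_or_pos k with hk | hk
    · omega
    · have h1 : (↑(k - 1) : ℤ) + (i + 1) < (lam.part (k - 1) : ℤ) := by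
        have := hrow hk
        omega
      have h2 := (mem_segSet_iff lam (i + 1) (k - 1)).mp h1
      omega
  exact ⟨hEik.symm, by simp only; omega, by omega, by omega⟩

lemma add_exists {lam : PartitionSeq} {i : ℤ}
    (h1 : Ei lam (i - 1) = Ei lam i + 1) (h2 : Ei lam (i + 1) = Ei lam i) :
    AddP lam i (((Ei lam i : ℤ) + i).toNat, Ei lam i) := by
  set k := Ei lam i with hk
  have hjZ : (0 : ℤ) ≤ (k : ℤ) + i := by
    have := m_le_Ei lam i
    omega
  set j : ℕ := ((k : ℤ) + i).toNat with hj
  have hjc : (j : ℤ) = (k : ℤ) + i := by omega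
  -- part k = j
  have hnotseg : ¬ ((k : ℤ) + i < (lam.part k : ℤ)) := by
    rw [mem_segSet_iff]
    omega
  have hseg : ((k : ℤ) + (i - 1) < (lam.part k : ℤ)) := by
    rw [mem_segSet_iff]
    omega
  have hpk : (lam.part k : ℤ) = (k : ℤ) + i := by omega
  have hrowup : ∀ y : ℕ, y < k → (j : ℤ) < (lam.part y : ℤ) := by
    intro y hy
    have h4 : ((k - 1 : ℕ) : ℤ) + (i + 1) < (lam.part (k - 1) : ℤ) := by
      rw [mem_segSet_iff]
      omega
    have := part_anti lam (show y ≤ k - 1 by omega)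
    omega
  refine ⟨by simp [boxResidue]; omega, by simp [PartitionSeq.diagram]; omega, ?_⟩
  apply exists_partition_of_LC
  · exact (diagram_finite lam).union (Set.finite_singleton _)
  · rintro ⟨x1, x2⟩ ⟨y1, y2⟩ hx1 hx2 hy
    rcases hy with hy | hy
    · exact Or.inl (diagram_LC lam _ _ hx1 hx2 hy)
    · simp only [Set.mem_singleton_iff, Prod.mk.injEq] at hy
      obtain ⟨rfl, rfl⟩ := hy
      by_cases hxb : x1 = j ∧ x2 = k
      · exact Or.inr (by simp [hxb.1, hxb.2])
      · left
        show x1 < lam.part x2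
        rcases Nat.lt_or_ge x1 j with hlt | hge
        · have : lam.part k ≤ lam.part x2 := part_anti lam hx2
          omega
        · have hx1j : x1 = j := by omega
          have hx2k : x2 < k := by
            rcases Nat.lt_or_ge x2 k with h' | h'
            · exact h'
            · exact absurd ⟨hx1j, by omega⟩ hxb
          have := hrowup x2 hx2k
          omega

lemma add_unique {lam : PartitionSeq} {i : ℤ} {b1 b2 : ℕ × ℕ}
    (h1 : AddP lam i b1) (h2 : AddP lam i b2) : b1 = b2 := by
  have s1 := add_spec h1
  have s2 := add_spec h2
  obtain ⟨r1, -, -⟩ := h1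
  obtain ⟨r2, -, -⟩ := h2
  simp only [boxResidue] at r1 r2
  have hsnd : b1.2 = b2.2 := by omega
  have hfst : b1.1 = b2.1 := by omega
  exact Prod.ext hfst hsnd

lemma rem_spec {lam : PartitionSeq} {i : ℤ} {b : ℕ × ℕ} (h : RemP lam i b) :
    b.2 + 1 = Ei lam i ∧ (lam.part b.2 : ℤ) = (b.2 : ℤ) + i + 1 ∧
      (lam.part (b.2 + 1) : ℤ) ≤ (b.2 : ℤ) + i ∧
      Ei lam (i - 1) = Ei lam i ∧ Ei lam (i + 1) + 1 = Ei lam i := by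
  obtain ⟨j, k⟩ := b
  obtain ⟨hres, hin, mu, hmu⟩ := h
  simp only [boxResidue] at hres
  have hLC : LC (lam.diagram \ {(j, k)}) := hmu ▸ diagram_LC mu
  have hinD : j < lam.part k := hin
  have hr : (j + 1, k) ∉ lam.diagram := by
    intro hc
    have h1 : (j + 1, k) ∈ lam.diagram \ {(j, k)} := ⟨hc, by simp⟩
    have h2 := hLC (j, k) (j + 1, k) (by omega) le_rfl h1
    exact h2.2 rfl
  have hd : (j, k + 1) ∉ lam.diagram := by
    intro hc
    have h1 : (j, k + 1) ∈ lam.diagram \ {(j, k)} := ⟨hc, by simp⟩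
    have h2 := hLC (j, k) (j, k + 1) le_rfl (by omega) h1
    exact h2.2 rfl
  have hpk : lam.part k = j + 1 := by
    have : ¬ (j + 1 < lam.part k) := hr
    omega
  have hpk1 : lam.part (k + 1) ≤ j := by
    have : ¬ (j < lam.part (k + 1)) := hd
    omega
  -- E i = k + 1
  have e1 : (k : ℤ) + i < (lam.part k : ℤ) := by omega
  have e1' := (mem_segSet_iff lam i k).mp e1
  have e2 : ¬ (((k + 1 : ℕ) : ℤ) + i < (lam.part (k + 1) : ℤ)) := by
    push_cast
    omega
  have e2' : ¬ (k + 1 < Ei lam i) := fun hc => e2 ((mem_segSet_iff lam i (k + 1)).mpr hc)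
  have hEi : Ei lam i = k + 1 := by omega
  -- E (i-1) = k + 1
  have e3 : ¬ (((k + 1 : ℕ) : ℤ) + (i - 1) < (lam.part (k + 1) : ℤ)) := by
    push_cast
    omega
  have e3' : ¬ (k + 1 < Ei lam (i - 1)) :=
    fun hc => e3 ((mem_segSet_iff lam (i - 1) (k + 1)).mpr hc)
  have e3'' := Ei_succ_le lam (i - 1)
  rw [sub_add_cancel] at e3''
  -- E (i+1) = k
  have e4 : ¬ ((k : ℤ) + (i + 1) < (lam.part k : ℤ)) := by omega
  have e4' : ¬ (k < Ei lam (i + 1)) := fun hc => e4 ((mem_segSet_iff lam (i + 1) k).mpr hc)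
  have e4'' := Ei_le_succ lam i
  refine ⟨by omega, by simp only; omega, ?_, by omega, by omega⟩
  simp only
  omega

lemma rem_exists {lam : PartitionSeq} {i : ℤ}
    (h1 : Ei lam (i - 1) = Ei lam i) (h2 : Ei lam (i + 1) + 1 = Ei lam i) :
    RemP lam i (((Ei lam i : ℤ) - 1 + i).toNat, Ei lam i - 1) := by
  have hm1 := m_le_Ei lam (i - 1)
  have hm0 := m_le_Ei lam i
  have hjZ : (0 : ℤ) ≤ (Ei lam i : ℤ) - 1 + i := by omega
  have hE1 : 1 ≤ Ei lam i := by omega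
  set k : ℕ := Ei lam i - 1 with hk
  have hkc : (k : ℤ) = (Ei lam i : ℤ) - 1 := by omega
  set j : ℕ := ((Ei lam i : ℤ) - 1 + i).toNat with hj
  have hjc : (j : ℤ) = (k : ℤ) + i := by omega
  have hseg : (k : ℤ) + i < (lam.part k : ℤ) := by
    rw [mem_segSet_iff]
    omega
  have hnotseg : ¬ ((k : ℤ) + (i + 1) < (lam.part k : ℤ)) := by
    rw [mem_segSet_iff]
    omega
  have hpk : (lam.part k : ℤ) = (j : ℤ) + 1 := by omega
  have hpk1 : (lam.part (k + 1) : ℤ) ≤ (j : ℤ) := by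
    have : ¬ (((k + 1 : ℕ) : ℤ) + (i - 1) < (lam.part (k + 1) : ℤ)) := by
      rw [mem_segSet_iff]
      omega
    push_cast at this
    omega
  refine ⟨by simp [boxResidue]; omega, by simp [PartitionSeq.diagram]; omega, ?_⟩
  apply exists_partition_of_LC
  · exact (diagram_finite lam).diff
  · rintro ⟨x1, x2⟩ ⟨y1, y2⟩ hx1 hx2 ⟨hy, hyb⟩
    simp only [Set.mem_singleton_iff, Prod.mk.injEq] at hyb
    refine ⟨diagram_LC lam _ _ hx1 hx2 hy, ?_⟩
    simp only [Set.mem_singleton_iff, Prod.mk.injEq]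
    rintro ⟨he1, he2⟩
    -- x = b = (j, k), y ≥ b, y ∈ diagram, y ≠ b : contradiction
    have hyD : y1 < lam.part y2 := hy
    rcases Nat.lt_or_ge y2 (k + 1) with h' | h'
    · -- y2 = x2 = k
      have hy2 : y2 = k := by omega
      subst hy2
      exact hyb ⟨by omega, rfl⟩
    · -- y2 ≥ k + 1
      have : lam.part y2 ≤ lam.part (k + 1) := part_anti lam h'
      omega

lemma rem_unique {lam : PartitionSeq} {i : ℤ} {b1 b2 : ℕ × ℕ}
    (h1 : RemP lam i b1) (h2 : RemP lam i b2) : b1 = b2 := by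
  have s1 := rem_spec h1
  have s2 := rem_spec h2
  obtain ⟨r1, -, -⟩ := h1
  obtain ⟨r2, -, -⟩ := h2
  simp only [boxResidue] at r1 r2
  have hsnd : b1.2 = b2.2 := by omega
  have hfst : b1.1 = b2.1 := by omega
  exact Prod.ext hfst hsnd

end AddRem

section EChange

lemma nat_eq_of_lt_iff {a b : ℕ} (h : ∀ x, x < a ↔ x < b) : a = b := by
  have h1 := h a
  have h2 := h b
  omega

lemma part_of_add {lam mu : PartitionSeq} {i : ℤ} {b : ℕ × ℕ}
    (hres : boxResidue b = i) (hnot : b ∉ lam.diagram)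
    (hmu : mu.diagram = lam.diagram ∪ {b}) :
    (∀ y, y ≠ b.2 → mu.part y = lam.part y) ∧ mu.part b.2 = lam.part b.2 + 1 := by
  have hadd : AddP lam i b := ⟨hres, hnot, mu, hmu⟩
  have hs := add_spec hadd
  have hmem : ∀ x y : ℕ, x < mu.part y ↔ (x < lam.part y ∨ (x, y) = b) := by
    intro x y
    have h1 : ((x, y) ∈ mu.diagram) ↔ ((x, y) ∈ lam.diagram ∪ {b}) := by rw [hmu]
    simpa only [PartitionSeq.diagram, Set.mem_union, Set.mem_setOf_eq,
      Set.mem_singleton_iff] using h1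
  constructor
  · intro y hy
    apply nat_eq_of_lt_iff
    intro x
    rw [hmem]
    constructor
    · rintro (h | h)
      · exact h
      · exact absurd (congrArg Prod.snd h) hy
    · exact Or.inl
  · apply nat_eq_of_lt_iff
    intro x
    rw [hmem]
    have hb1 : (b.1 : ℤ) = (b.2 : ℤ) + i := by
      simp only [boxResidue] at hres
      omega
    have hpk : (lam.part b.2 : ℤ) = (b.2 : ℤ) + i := hs.2.1
    constructor
    · rintro (h | h)
      · omega
      · have hx : x = b.1 := congrArg Prod.fst h
        omega
    · intro h
      rcases Nat.lt_or_ge x (lam.part b.2) with h' | h'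
      · exact Or.inl h'
      · right
        have hx : x = b.1 := by omega
        exact Prod.ext hx rfl

lemma Ei_add {lam mu : PartitionSeq} {i : ℤ} {b : ℕ × ℕ}
    (hres : boxResidue b = i) (hnot : b ∉ lam.diagram)
    (hmu : mu.diagram = lam.diagram ∪ {b}) (l : ℤ) :
    Ei mu l = Ei lam l + (if l = i then 1 else 0) := by
  have hadd : AddP lam i b := ⟨hres, hnot, mu, hmu⟩
  obtain ⟨hk, hpk, -, -⟩ := add_spec hadd
  have hp := part_of_add hres hnot hmu
  have key : ∀ k' : ℕ, (k' : ℤ) + l < (mu.part k' : ℤ) ↔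
      k' < Ei lam l + (if l = i then 1 else 0) := by
    intro k'
    by_cases hl : l = i
    · subst hl
      rw [if_pos rfl]
      by_cases hk' : k' = b.2
      · subst hk'
        rw [hp.2]
        push_cast
        omega
      · rw [hp.1 k' hk', mem_segSet_iff]
        omega
    · simp only [if_neg hl, add_zero]
      by_cases hk' : k' = b.2
      · subst hk'
        rw [hp.2]
        constructor
        · intro h
          have h2 : (b.2 : ℤ) + l < (lam.part b.2 : ℤ) := by
            push_cast at h
            omega
          exact (mem_segSet_iff lam l b.2).mp h2
        · intro h
          have := (mem_segSet_iff lam l b.2).mpr h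
          push_cast
          omega
      · rw [hp.1 k' hk', mem_segSet_iff]
  have hE : segSet mu l = Set.Iio (Ei lam l + (if l = i then 1 else 0)) := by
    ext k'
    simp only [segSet, Set.mem_setOf_eq, Set.mem_Iio]
    exact key k'
  rw [Ei, hE, ← Finset.coe_Iio, Set.ncard_coe_finset, Nat.card_Iio]

lemma Ei_rem {lam nu : PartitionSeq} {i : ℤ} {b : ℕ × ℕ}
    (hres : boxResidue b = i) (hin : b ∈ lam.diagram)
    (hnu : nu.diagram = lam.diagram \ {b}) (l : ℤ) :
    Ei lam l = Ei nu l + (if l = i then 1 else 0) := by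
  apply Ei_add hres (by rw [hnu]; simp) _ l
  rw [hnu, Set.diff_union_of_subset (by simpa using hin)]

lemma boxCount_cast (lam : PartitionSeq) (l : ℤ) :
    (boxCount lam l : ℤ) = (Ei lam l : ℤ) - ((-l).toNat : ℤ) := by
  rw [boxCount_eq]
  have := m_le_Ei lam l
  omega

end EChange

section OpSingle

open Classical

lemma choose_add_eq {lam mu : PartitionSeq} {i : ℤ} {b : ℕ × ℕ}
    (hw : boxResidue b = i ∧ b ∉ lam.diagram ∧ mu.diagram = lam.diagram ∪ {b})
    (h : ∃ m : PartitionSeq, ∃ b : ℕ × ℕ,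
      boxResidue b = i ∧ b ∉ lam.diagram ∧ m.diagram = lam.diagram ∪ {b}) :
    h.choose = mu := by
  obtain ⟨b', hres', hnot', hdiag'⟩ := h.choose_spec
  have hb : b' = b :=
    add_unique (⟨hres', hnot', h.choose, hdiag'⟩ : AddP lam i b')
      (⟨hw.1, hw.2.1, mu, hw.2.2⟩ : AddP lam i b)
  apply ext_of_diagram
  rw [hdiag', hb, hw.2.2]

lemma choose_rem_eq {lam nu : PartitionSeq} {i : ℤ} {b : ℕ × ℕ}
    (hw : boxResidue b = i ∧ b ∈ lam.diagram ∧ nu.diagram = lam.diagram \ {b})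
    (h : ∃ m : PartitionSeq, ∃ b : ℕ × ℕ,
      boxResidue b = i ∧ b ∈ lam.diagram ∧ m.diagram = lam.diagram \ {b}) :
    h.choose = nu := by
  obtain ⟨b', hres', hin', hdiag'⟩ := h.choose_spec
  have hb : b' = b :=
    rem_unique (⟨hres', hin', h.choose, hdiag'⟩ : RemP lam i b')
      (⟨hw.1, hw.2.1, nu, hw.2.2⟩ : RemP lam i b)
  apply ext_of_diagram
  rw [hdiag', hb, hw.2.2]

lemma fOp_single_of_add {lam mu : PartitionSeq} {i : ℤ} {b : ℕ × ℕ}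
    (hw : boxResidue b = i ∧ b ∉ lam.diagram ∧ mu.diagram = lam.diagram ∪ {b}) :
    fOp i (Finsupp.single lam 1) = Finsupp.single mu 1 := by
  have hcond : ∃ m : PartitionSeq, ∃ b : ℕ × ℕ,
      boxResidue b = i ∧ b ∉ lam.diagram ∧ m.diagram = lam.diagram ∪ {b} :=
    ⟨mu, b, hw⟩
  simp only [fOp, Finsupp.lift_apply, Finsupp.sum_single_index, zero_smul, one_smul]
  rw [dif_pos hcond, choose_add_eq hw hcond]

lemma fOp_single_of_not {lam : PartitionSeq} {i : ℤ}
    (h : ¬ ∃ b : ℕ × ℕ, AddP lam i b) :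
    fOp i (Finsupp.single lam 1) = 0 := by
  have hcond : ¬ ∃ m : PartitionSeq, ∃ b : ℕ × ℕ,
      boxResidue b = i ∧ b ∉ lam.diagram ∧ m.diagram = lam.diagram ∪ {b} := by
    rintro ⟨m, b, h1, h2, h3⟩
    exact h ⟨b, h1, h2, m, h3⟩
  simp only [fOp, Finsupp.lift_apply, Finsupp.sum_single_index, zero_smul, one_smul]
  rw [dif_neg hcond]

lemma eOp_single_of_rem {lam nu : PartitionSeq} {i : ℤ} {b : ℕ × ℕ}
    (hw : boxResidue b = i ∧ b ∈ lam.diagram ∧ nu.diagram = lam.diagram \ {b}) :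
    eOp i (Finsupp.single lam 1) = Finsupp.single nu 1 := by
  have hcond : ∃ m : PartitionSeq, ∃ b : ℕ × ℕ,
      boxResidue b = i ∧ b ∈ lam.diagram ∧ m.diagram = lam.diagram \ {b} :=
    ⟨nu, b, hw⟩
  simp only [eOp, Finsupp.lift_apply, Finsupp.sum_single_index, zero_smul, one_smul]
  rw [dif_pos hcond, choose_rem_eq hw hcond]

lemma eOp_single_of_not {lam : PartitionSeq} {i : ℤ}
    (h : ¬ ∃ b : ℕ × ℕ, RemP lam i b) :
    eOp i (Finsupp.single lam 1) = 0 := by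
  have hcond : ¬ ∃ m : PartitionSeq, ∃ b : ℕ × ℕ,
      boxResidue b = i ∧ b ∈ lam.diagram ∧ m.diagram = lam.diagram \ {b} := by
    rintro ⟨m, b, h1, h2, h3⟩
    exact h ⟨b, h1, h2, m, h3⟩
  simp only [eOp, Finsupp.lift_apply, Finsupp.sum_single_index, zero_smul, one_smul]
  rw [dif_neg hcond]

lemma hOp_single (lam : PartitionSeq) (i : ℤ) :
    hOp i (Finsupp.single lam 1) =
      ((((Ei lam (i - 1) : ℤ) + (Ei lam (i + 1) : ℤ) - 2 * (Ei lam i : ℤ) : ℤ) : ℂ)) •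
        Finsupp.single lam 1 := by
  have hco : ((if i = 0 then 1 else 0) - 2 * (boxCount lam i : ℤ)
      + (boxCount lam (i - 1) : ℤ) + (boxCount lam (i + 1) : ℤ) : ℤ)
      = (Ei lam (i - 1) : ℤ) + (Ei lam (i + 1) : ℤ) - 2 * (Ei lam i : ℤ) := by
    rw [boxCount_cast, boxCount_cast, boxCount_cast]
    split_ifs with h
    · subst h
      omega
    · omega
  simp only [hOp, Finsupp.lift_apply, Finsupp.sum_single_index, zero_smul, one_smul]
  rw [hco]

lemma exAdd_iff (lam : PartitionSeq) (i : ℤ) :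
    (∃ b : ℕ × ℕ, AddP lam i b) ↔
      (Ei lam (i - 1) = Ei lam i + 1 ∧ Ei lam (i + 1) = Ei lam i) := by
  constructor
  · rintro ⟨b, hb⟩
    obtain ⟨-, -, h1, h2⟩ := add_spec hb
    exact ⟨h1, h2⟩
  · rintro ⟨h1, h2⟩
    exact ⟨_, add_exists h1 h2⟩

lemma exRem_iff (lam : PartitionSeq) (i : ℤ) :
    (∃ b : ℕ × ℕ, RemP lam i b) ↔
      (Ei lam (i - 1) = Ei lam i ∧ Ei lam (i + 1) + 1 = Ei lam i) := by
  constructor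
  · rintro ⟨b, hb⟩
    obtain ⟨-, -, -, h1, h2⟩ := rem_spec hb
    exact ⟨h1, h2⟩
  · rintro ⟨h1, h2⟩
    exact ⟨_, rem_exists h1 h2⟩

lemma lhom_ext1 {phi psi : PartSpace →ₗ[ℂ] PartSpace}
    (h : ∀ lam : PartitionSeq, phi (Finsupp.single lam 1) = psi (Finsupp.single lam 1)) :
    phi = psi := by
  apply Finsupp.lhom_ext
  intro lam c
  have hc : (Finsupp.single lam c : PartSpace) = c • Finsupp.single lam 1 := by
    rw [Finsupp.smul_single, smul_eq_mul, mul_one]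
  rw [hc, map_smul, map_smul, h]

end OpSingle

section Relations

lemma rel_he (i j : ℤ) :
    hOp i ∘ₗ eOp j - eOp j ∘ₗ hOp i = ((cartanAInf i j : ℤ) : ℂ) • eOp j := by
  apply lhom_ext1
  intro lam
  simp only [LinearMap.sub_apply, LinearMap.comp_apply, LinearMap.smul_apply]
  by_cases hR : ∃ b : ℕ × ℕ, RemP lam j b
  · obtain ⟨b, hres, hin, nu, hnu⟩ := hR
    have he : eOp j (Finsupp.single lam 1) = Finsupp.single nu 1 :=
      eOp_single_of_rem ⟨hres, hin, hnu⟩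
    have hE := fun l => Ei_rem hres hin hnu l
    rw [he, hOp_single, hOp_single, map_smul, he]
    have hintZ : (((Ei nu (i - 1) : ℤ) + (Ei nu (i + 1) : ℤ) - 2 * (Ei nu i : ℤ))
        - ((Ei lam (i - 1) : ℤ) + (Ei lam (i + 1) : ℤ) - 2 * (Ei lam i : ℤ)))
        = cartanAInf i j := by
      have h1 := hE (i - 1)
      have h2 := hE i
      have h3 := hE (i + 1)
      simp only [cartanAInf]
      split_ifs at h1 h2 h3 ⊢ <;> omega
    rw [← sub_smul, ← Int.cast_sub, hintZ]
  · have he0 : eOp j (Finsupp.single lam 1) = 0 := by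
      apply eOp_single_of_not
      rintro ⟨b, hb⟩
      exact hR ⟨b, hb⟩
    rw [he0, map_zero, hOp_single, map_smul, he0, smul_zero, smul_zero, sub_zero]

lemma rel_hf (i j : ℤ) :
    hOp i ∘ₗ fOp j - fOp j ∘ₗ hOp i = -(((cartanAInf i j : ℤ) : ℂ)) • fOp j := by
  apply lhom_ext1
  intro lam
  simp only [LinearMap.sub_apply, LinearMap.comp_apply, LinearMap.smul_apply]
  by_cases hA : ∃ b : ℕ × ℕ, AddP lam j b
  · obtain ⟨b, hres, hnot, mu, hmu⟩ := hA
    have hf : fOp j (Finsupp.single lam 1) = Finsupp.single mu 1 :=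
      fOp_single_of_add ⟨hres, hnot, hmu⟩
    have hE := fun l => Ei_add hres hnot hmu l
    rw [hf, hOp_single, hOp_single, map_smul, hf]
    have hintZ : (((Ei mu (i - 1) : ℤ) + (Ei mu (i + 1) : ℤ) - 2 * (Ei mu i : ℤ))
        - ((Ei lam (i - 1) : ℤ) + (Ei lam (i + 1) : ℤ) - 2 * (Ei lam i : ℤ)))
        = -cartanAInf i j := by
      have h1 := hE (i - 1)
      have h2 := hE i
      have h3 := hE (i + 1)
      simp only [cartanAInf]
      split_ifs at h1 h2 h3 ⊢ <;> omega
    rw [← sub_smul, ← Int.cast_sub, hintZ]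
    simp
  · have hf0 : fOp j (Finsupp.single lam 1) = 0 := by
      apply fOp_single_of_not
      rintro ⟨b, hb⟩
      exact hA ⟨b, hb⟩
    rw [hf0, map_zero, hOp_single, map_smul, hf0, smul_zero, smul_zero, sub_zero]

end Relations

section RelEF

lemma rel_ef_diag (i : ℤ) : eOp i ∘ₗ fOp i - fOp i ∘ₗ eOp i = hOp i := by
  apply lhom_ext1
  intro lam
  simp only [LinearMap.sub_apply, LinearMap.comp_apply]
  have step1 := Ei_succ_le lam (i - 1)
  have step1' := Ei_le_succ lam (i - 1)
  rw [sub_add_cancel] at step1 step1'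
  have step2 := Ei_succ_le lam i
  have step2' := Ei_le_succ lam i
  rw [hOp_single]
  by_cases hA : Ei lam (i - 1) = Ei lam i + 1 ∧ Ei lam (i + 1) = Ei lam i
  · -- addable box exists, removable does not
    obtain ⟨bA, hAP⟩ : ∃ b : ℕ × ℕ, AddP lam i b := (exAdd_iff lam i).mpr hA
    obtain ⟨hresA, hnotA, mu, hmu⟩ := hAP
    have hf : fOp i (Finsupp.single lam 1) = Finsupp.single mu 1 :=
      fOp_single_of_add ⟨hresA, hnotA, hmu⟩
    have he : eOp i (Finsupp.single mu 1) = Finsupp.single lam 1 := by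
      apply eOp_single_of_rem (b := bA)
      refine ⟨hresA, ?_, ?_⟩
      · rw [hmu]
        exact Set.mem_union_right _ rfl
      · rw [hmu, Set.union_diff_cancel_right]
        rintro x ⟨hx1, hx2⟩
        simp only [Set.mem_singleton_iff] at hx2
        rw [hx2] at hx1
        exact hnotA hx1
    have he0 : eOp i (Finsupp.single lam 1) = 0 := by
      apply eOp_single_of_not
      rw [exRem_iff]
      omega
    rw [hf, he, he0, map_zero, sub_zero]
    have h1 : ((Ei lam (i - 1) : ℤ) + (Ei lam (i + 1) : ℤ) - 2 * (Ei lam i : ℤ)) = 1 := by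
      omega
    rw [h1]
    simp
  · by_cases hRc : Ei lam (i - 1) = Ei lam i ∧ Ei lam (i + 1) + 1 = Ei lam i
    · -- removable box exists, addable does not
      obtain ⟨bR, hRP⟩ : ∃ b : ℕ × ℕ, RemP lam i b := (exRem_iff lam i).mpr hRc
      obtain ⟨hresR, hinR, nu, hnu⟩ := hRP
      have he : eOp i (Finsupp.single lam 1) = Finsupp.single nu 1 :=
        eOp_single_of_rem ⟨hresR, hinR, hnu⟩
      have hf' : fOp i (Finsupp.single nu 1) = Finsupp.single lam 1 := by
        apply fOp_single_of_add (b := bR)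
        refine ⟨hresR, ?_, ?_⟩
        · rw [hnu]
          simp
        · rw [hnu, Set.diff_union_of_subset (by simpa using hinR)]
      have hf0 : fOp i (Finsupp.single lam 1) = 0 := by
        apply fOp_single_of_not
        rw [exAdd_iff]
        omega
      rw [hf0, map_zero, he, hf', zero_sub]
      have h1 : ((Ei lam (i - 1) : ℤ) + (Ei lam (i + 1) : ℤ) - 2 * (Ei lam i : ℤ)) = -1 := by
        omega
      rw [h1]
      simp
    · -- neither
      have he0 : eOp i (Finsupp.single lam 1) = 0 := by
        apply eOp_single_of_not
        rw [exRem_iff]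
        omega
      have hf0 : fOp i (Finsupp.single lam 1) = 0 := by
        apply fOp_single_of_not
        rw [exAdd_iff]
        omega
      rw [hf0, map_zero, he0, map_zero, sub_zero]
      have h1 : ((Ei lam (i - 1) : ℤ) + (Ei lam (i + 1) : ℤ) - 2 * (Ei lam i : ℤ)) = 0 := by
        omega
      rw [h1]
      simp

end RelEF

section RelEFOff

lemma rel_ef_off {i j : ℤ} (hij : i ≠ j) :
    eOp i ∘ₗ fOp j - fOp j ∘ₗ eOp i = 0 := by
  apply lhom_ext1
  intro lam
  simp only [LinearMap.sub_apply, LinearMap.comp_apply, LinearMap.zero_apply]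
  rw [sub_eq_zero]
  have stepA := Ei_succ_le lam (j - 1)
  have stepA' := Ei_le_succ lam (j - 1)
  rw [sub_add_cancel] at stepA stepA'
  have stepB := Ei_succ_le lam j
  have stepB' := Ei_le_succ lam j
  have stepC := Ei_succ_le lam (i - 1)
  have stepC' := Ei_le_succ lam (i - 1)
  rw [sub_add_cancel] at stepC stepC'
  have stepD := Ei_succ_le lam i
  have stepD' := Ei_le_succ lam i
  by_cases hA : Ei lam (j - 1) = Ei lam j + 1 ∧ Ei lam (j + 1) = Ei lam j
  · obtain ⟨bA, hAP⟩ : ∃ b : ℕ × ℕ, AddP lam j b := (exAdd_iff lam j).mpr hA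
    obtain ⟨hresA, hnotA, mu, hmu⟩ := hAP
    have hsA := add_spec (⟨hresA, hnotA, mu, hmu⟩ : AddP lam j bA)
    have hf : fOp j (Finsupp.single lam 1) = Finsupp.single mu 1 :=
      fOp_single_of_add ⟨hresA, hnotA, hmu⟩
    have hEmu := fun l => Ei_add hresA hnotA hmu l
    by_cases hR : Ei lam (i - 1) = Ei lam i ∧ Ei lam (i + 1) + 1 = Ei lam i
    · -- both outer conditions hold
      obtain ⟨bR, hRP⟩ : ∃ b : ℕ × ℕ, RemP lam i b := (exRem_iff lam i).mpr hR
      obtain ⟨hresR, hinR, nu, hnu⟩ := hRP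
      have hsR := rem_spec (⟨hresR, hinR, nu, hnu⟩ : RemP lam i bR)
      have he : eOp i (Finsupp.single lam 1) = Finsupp.single nu 1 :=
        eOp_single_of_rem ⟨hresR, hinR, hnu⟩
      have hEnu := fun l => Ei_rem hresR hinR hnu l
      rw [hf, he]
      have hbne : bA ≠ bR := by
        intro h
        apply hij
        rw [← hresR, ← h, hresA]
      by_cases hInner : Ei nu (j - 1) = Ei nu j + 1 ∧ Ei nu (j + 1) = Ei nu j
      · -- both compositions defined; results agree
        obtain ⟨bA', hAP'⟩ : ∃ b : ℕ × ℕ, AddP nu j b := (exAdd_iff nu j).mpr hInner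
        obtain ⟨hresA', hnotA', sigma, hsigma⟩ := hAP'
        have hsA' := add_spec (⟨hresA', hnotA', sigma, hsigma⟩ : AddP nu j bA')
        have hbb : bA' = bA := by
          have hEj := hEnu j
          rw [if_neg (fun hc => hij hc.symm)] at hEj
          have h2 : bA'.2 = bA.2 := by omega
          simp only [boxResidue] at hresA hresA'
          have h1 : bA'.1 = bA.1 := by omega
          exact Prod.ext h1 h2
        have hf' : fOp j (Finsupp.single nu 1) = Finsupp.single sigma 1 :=
          fOp_single_of_add ⟨hresA', hnotA', hsigma⟩
        have htauset : mu.diagram \ {bR} = nu.diagram ∪ {bA} := by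
          rw [hmu, hnu]
          ext x
          simp only [Set.mem_union, Set.mem_diff, Set.mem_singleton_iff]
          constructor
          · rintro ⟨hx | hx, hxb⟩
            · exact Or.inl ⟨hx, hxb⟩
            · exact Or.inr hx
          · rintro (⟨hx, hxb⟩ | hx)
            · exact ⟨Or.inl hx, hxb⟩
            · refine ⟨Or.inr hx, ?_⟩
              rw [hx]
              exact hbne
        have he' : eOp i (Finsupp.single mu 1) = Finsupp.single sigma 1 := by
          apply eOp_single_of_rem (b := bR)
          refine ⟨hresR, ?_, ?_⟩
          · rw [hmu]
            exact Set.mem_union_left _ hinR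
          · rw [hsigma, hbb, htauset]
        rw [he', hf']
      · -- neither composition defined
        have hf0 : fOp j (Finsupp.single nu 1) = 0 := by
          apply fOp_single_of_not
          rw [exAdd_iff]
          exact hInner
        have he0 : eOp i (Finsupp.single mu 1) = 0 := by
          apply eOp_single_of_not
          rw [exRem_iff]
          intro hc
          apply hInner
          have h1 := hEmu (i - 1)
          have h2 := hEmu i
          have h3 := hEmu (i + 1)
          have h4 := hEnu (j - 1)
          have h5 := hEnu j
          have h6 := hEnu (j + 1)
          constructor <;> (split_ifs at h1 h2 h3 h4 h5 h6 <;> omega)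
        rw [he0, hf0]
    · -- removable at i does not exist for lam
      have he0 : eOp i (Finsupp.single lam 1) = 0 := by
        apply eOp_single_of_not
        rw [exRem_iff]
        exact hR
      have he0' : eOp i (Finsupp.single mu 1) = 0 := by
        apply eOp_single_of_not
        rw [exRem_iff]
        intro hc
        apply hR
        have h1 := hEmu (i - 1)
        have h2 := hEmu i
        have h3 := hEmu (i + 1)
        constructor <;> (split_ifs at h1 h2 h3 <;> omega)
      rw [hf, he0, he0', map_zero]
  · -- addable at j does not exist for lam
    have hf0 : fOp j (Finsupp.single lam 1) = 0 := by
      apply fOp_single_of_not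
      rw [exAdd_iff]
      exact hA
    by_cases hR : Ei lam (i - 1) = Ei lam i ∧ Ei lam (i + 1) + 1 = Ei lam i
    · obtain ⟨bR, hRP⟩ : ∃ b : ℕ × ℕ, RemP lam i b := (exRem_iff lam i).mpr hR
      obtain ⟨hresR, hinR, nu, hnu⟩ := hRP
      have he : eOp i (Finsupp.single lam 1) = Finsupp.single nu 1 :=
        eOp_single_of_rem ⟨hresR, hinR, hnu⟩
      have hEnu := fun l => Ei_rem hresR hinR hnu l
      have hf0' : fOp j (Finsupp.single nu 1) = 0 := by
        apply fOp_single_of_not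
        rw [exAdd_iff]
        intro hc
        apply hA
        have h4 := hEnu (j - 1)
        have h5 := hEnu j
        have h6 := hEnu (j + 1)
        constructor <;> (split_ifs at h4 h5 h6 <;> omega)
      rw [hf0, map_zero, he, hf0']
    · have he0 : eOp i (Finsupp.single lam 1) = 0 := by
        apply eOp_single_of_not
        rw [exRem_iff]
        exact hR
      rw [hf0, map_zero, he0, map_zero]

end RelEFOff


/-- the box-addition, box-removal and diagonal operators on the free vector
space on partitions satisfy the Chevalley relations of `sl_∞`:
`[e_i, f_j] = δ_{ij} h_i`, `[h_i, e_j] = C_{ij} e_j`, `[h_i, f_j] = −C_{ij} f_j`. -/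
theorem chevalley_relations (i j : ℤ) :
    (eOp i ∘ₗ fOp j - fOp j ∘ₗ eOp i = if i = j then hOp i else 0) ∧
    (hOp i ∘ₗ eOp j - eOp j ∘ₗ hOp i = ((cartanAInf i j : ℤ) : ℂ) • eOp j) ∧
    (hOp i ∘ₗ fOp j - fOp j ∘ₗ hOp i = -(((cartanAInf i j : ℤ) : ℂ)) • fOp j) := by
  refine ⟨?_, rel_he i j, rel_hf i j⟩
  by_cases h : i = j
  · subst h
    rw [if_pos rfl]
    exact rel_ef_diag i
  · rw [if_neg h]
    exact rel_ef_off h
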